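/- Let K be an algebraically closed field and let V_n ⊆ K^{2n} be the variety cut out by the equations y1x1 = x2 + 1, y_i x_i = x_{i+1} + x_{i-1} for 2 ≤ i ≤ n-1, and y_n x_n = 1 + x_{n-1}. Then for any point p of V_n, the values x_i(p) and x_{i+1}(p) are not both zero, for every 1 ≤ i ≤ n-1. -/
import Mathlib


/-- On the lower bound variety of the linear `Aₙ` quiver `1 → 2 → ⋯ → n` over an
algebraically closed field (cut out by `y₁x₁ = x₂ + 1`, `yᵢxᵢ = x_{i+1} + x_{i-1}`
for `2 ≤ i ≤ n-1`, and `yₙxₙ = 1 + x_{n-1}`), at every point the values `xᵢ` and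
`x_{i+1}` are not both zero, for every `1 ≤ i ≤ n-1`. -/
theorem consecutive_not_both_zero (K : Type*) [Field K] [IsAlgClosed K]
    (n : ℕ) (hn : 2 ≤ n) (x y : ℕ → K)
    (h1 : y 1 * x 1 = x 2 + 1)
    (hmid : ∀ i, 2 ≤ i → i ≤ n - 1 → y i * x i = x (i + 1) + x (i - 1))
    (hlast : y n * x n = 1 + x (n - 1)) :
    ∀ i, 1 ≤ i → i ≤ n - 1 → ¬(x i = 0 ∧ x (i + 1) = 0) := by
  intro i
  induction i with
  | zero => intro h; omega
  | succ k ih =>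
    intro _ hle ⟨hxk1, hxk2⟩
    rcases Nat.eq_zero_or_pos k with hk | hk
    · subst hk
      rw [hxk1, hxk2] at h1
      simp at h1
    · have h2k : 2 ≤ k + 1 := by omega
      have hm := hmid (k + 1) h2k hle
      rw [hxk1, hxk2] at hm
      simp at hm
      exact ih hk (by omega) ⟨hm.symm, hxk1⟩
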